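/- Let W be a finite set with |W| = 2g+2 where g is even. Let P2^-(W) be the set of odd-cardinality subsets of W modulo complementation, and define Q_-(Ā) = ((|A|+1)/2) mod 2. Then Q_- is well defined, P2^-(W) is a torsor under the group P2^+(W) (acting by symmetric difference), and for all s ∈ P2^-(W) and j1, j2 ∈ P2^+(W): Q_-(s) + Q_-(j1+s) + Q_-(j2+s) + Q_-(j1+j2+s) = e(j1, j2). -/

import Mathlib

open Finset
open scoped symmDiff

/-- The setoid on subsets of `W` identifying a subset with its complement. -/
def P2setoid (W : Type*) [DecidableEq W] [Fintype W] : Setoid (Finset W) where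
  r A B := B = A ∨ B = Aᶜ
  iseqv := by
    refine ⟨fun A => Or.inl rfl, ?_, ?_⟩
    · intro A B h
      rcases h with rfl | rfl
      · exact Or.inl rfl
      · exact Or.inr (by simp)
    · intro A B C h1 h2
      rcases h1 with rfl | rfl <;> rcases h2 with rfl | rfl <;> simp

lemma card_symmDiff_int' {W : Type*} [DecidableEq W] (s t : Finset W) :
    ((s ∆ t).card : ℤ) = s.card + t.card - 2 * (s ∩ t).card := by
  have h : s ∆ t = (s \ t) ∪ (t \ s) := rfl
  have hd : Disjoint (s \ t) (t \ s) := disjoint_sdiff_sdiff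
  have h1 := card_sdiff_add_card_inter s t
  have h2 := card_sdiff_add_card_inter t s
  rw [h, card_union_of_disjoint hd, inter_comm t s] at *
  push_cast
  omega

lemma compl_symmDiff_fin' {W : Type*} [DecidableEq W] [Fintype W] (s t : Finset W) :
    (s ∆ t)ᶜ = sᶜ ∆ t := by
  rw [symmDiff_comm s t, ← hnot_eq_compl, ← symmDiff_top (t ∆ s), symmDiff_assoc, symmDiff_top,
    symmDiff_comm, hnot_eq_compl]

/-- The quadratic function on odd subsets (extended by `0` on even subsets). -/
def Qfun {W : Type*} [DecidableEq W] [Fintype W] (A : Finset W) : ZMod 2 :=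
  if Even A.card then 0 else (((A.card + 1) / 2 : ℕ) : ZMod 2)

lemma Qfun_compl {W : Type*} [DecidableEq W] [Fintype W] (g : ℕ) (hg : Even g)
    (hW : Fintype.card W = 2 * g + 2) (A : Finset W) : Qfun A = Qfun Aᶜ := by
  obtain ⟨j, rfl⟩ := hg
  have hle : A.card ≤ Fintype.card W := A.card_le_univ
  have hcc : Aᶜ.card = Fintype.card W - A.card := card_compl A
  unfold Qfun
  by_cases hA : Even A.card
  · rw [if_pos hA, if_pos]
    rw [Nat.even_iff] at hA ⊢
    omega
  · rw [if_neg hA, if_neg]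
    · rw [ZMod.natCast_eq_natCast_iff']
      rw [Nat.not_even_iff] at hA
      omega
    · rw [Nat.not_even_iff] at hA ⊢
      omega

/-- For `|W| = 2g+2` with `g` even, the map `Q₋(Ā) = ((|A|+1)/2) mod 2` is
well defined on classes of odd subsets modulo complementation, `P2⁻(W)` is a torsor under
`P2⁺(W)` acting by symmetric difference, and the four-term symplectic-torsor identity
holds with respect to `e(Ā,B̄) = |A ∩ B| mod 2`. -/
theorem stmt_4 {W : Type*} [DecidableEq W] [Fintype W] (g : ℕ) (hg : Even g)
    (hW : Fintype.card W = 2 * g + 2) :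
    ∃ Qm : Quotient (P2setoid W) → ZMod 2,
      (∀ A : Finset W, ¬ Even A.card →
        Qm (Quotient.mk (P2setoid W) A) = (((A.card + 1) / 2 : ℕ) : ZMod 2)) ∧
      (∀ A B : Finset W, ¬ Even A.card → ¬ Even B.card →
        ∃ C : Finset W, Even C.card ∧
          Quotient.mk (P2setoid W) (C ∆ A) = Quotient.mk (P2setoid W) B) ∧
      (∀ A C C' : Finset W, ¬ Even A.card → Even C.card → Even C'.card →
        Quotient.mk (P2setoid W) (C ∆ A) = Quotient.mk (P2setoid W) (C' ∆ A) →
        Quotient.mk (P2setoid W) C = Quotient.mk (P2setoid W) C') ∧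
      (∀ A C₁ C₂ : Finset W, ¬ Even A.card → Even C₁.card → Even C₂.card →
        Qm (Quotient.mk (P2setoid W) A) + Qm (Quotient.mk (P2setoid W) (C₁ ∆ A)) +
          Qm (Quotient.mk (P2setoid W) (C₂ ∆ A)) +
          Qm (Quotient.mk (P2setoid W) (C₁ ∆ (C₂ ∆ A))) =
        ((C₁ ∩ C₂).card : ZMod 2)) := by
  have hwd : ∀ A B : Finset W, (P2setoid W).r A B → Qfun A = Qfun B := by
    intro A B h
    rcases h with rfl | rfl
    · rfl
    · exact Qfun_compl g hg hW A
  refine ⟨Quotient.lift Qfun hwd, ?_, ?_, ?_, ?_⟩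
  · intro A hA
    show Qfun A = _
    rw [Qfun, if_neg hA]
  · intro A B hA hB
    refine ⟨B ∆ A, ?_, ?_⟩
    · rw [Nat.not_even_iff] at hA hB
      rw [Nat.even_iff]
      have := card_symmDiff_int' B A
      omega
    · rw [symmDiff_symmDiff_cancel_right]
  · intro A C C' hA hC hC' h
    rw [Quotient.eq] at h
    apply Quotient.sound
    rcases h with h | h
    · exact Or.inl (symmDiff_left_injective A h)
    · rw [compl_symmDiff_fin'] at h
      exact Or.inr (symmDiff_left_injective A h)
  · intro A C₁ C₂ hA hC₁ hC₂
    have hassoc : C₁ ∆ (C₂ ∆ A) = (C₁ ∆ C₂) ∆ A := (symmDiff_assoc _ _ _).symm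
    rw [hassoc]
    rw [Nat.not_even_iff] at hA
    rw [Nat.even_iff] at hC₁ hC₂
    have h1 := card_symmDiff_int' C₁ A
    have h2 := card_symmDiff_int' C₂ A
    have h3 := card_symmDiff_int' (C₁ ∆ C₂) A
    have h4 := card_symmDiff_int' C₁ C₂
    have h5 : (C₁ ∆ C₂) ∩ A = (C₁ ∩ A) ∆ (C₂ ∩ A) := by ext x; simp [mem_symmDiff, mem_inter]; tauto
    have h6 := card_symmDiff_int' (C₁ ∩ A) (C₂ ∩ A)
    rw [h5] at h3
    have hm1 : ¬ Even (C₁ ∆ A).card := by rw [Nat.not_even_iff]; omega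
    have hm2 : ¬ Even (C₂ ∆ A).card := by rw [Nat.not_even_iff]; omega
    have hm12 : ¬ Even ((C₁ ∆ C₂) ∆ A).card := by rw [Nat.not_even_iff]; omega
    show Qfun A + Qfun (C₁ ∆ A) + Qfun (C₂ ∆ A) + Qfun ((C₁ ∆ C₂) ∆ A) = _
    rw [Qfun, Qfun, Qfun, Qfun, if_neg (by rw [Nat.not_even_iff]; exact hA),
      if_neg hm1, if_neg hm2, if_neg hm12]
    have key : ((A.card + 1) / 2 + ((C₁ ∆ A).card + 1) / 2 + ((C₂ ∆ A).card + 1) / 2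
        + (((C₁ ∆ C₂) ∆ A).card + 1) / 2) % 2 = (C₁ ∩ C₂).card % 2 := by
      omega
    calc (((A.card + 1) / 2 : ℕ) : ZMod 2) + (((C₁ ∆ A).card + 1) / 2 : ℕ)
          + (((C₂ ∆ A).card + 1) / 2 : ℕ) + ((((C₁ ∆ C₂) ∆ A).card + 1) / 2 : ℕ)
        = (((A.card + 1) / 2 + ((C₁ ∆ A).card + 1) / 2 + ((C₂ ∆ A).card + 1) / 2
            + (((C₁ ∆ C₂) ∆ A).card + 1) / 2 : ℕ) : ZMod 2) := by push_cast; ring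
      _ = ((C₁ ∩ C₂).card : ZMod 2) := (ZMod.natCast_eq_natCast_iff' _ _ _).mpr key
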